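/- Let S be a countable semigroup and τ an equivalence relation on S all of whose classes are finite. Then the quotient S^n/#_{S,τ,n} is finite for every n ≥ 1 if and only if S is ℵ₀-categorical and the set of cardinalities {|mτ| : m ∈ S} is finite. -/
import Mathlib


/-- Two `n`-tuples of a semigroup are automorphically equivalent if some semigroup
automorphism maps one to the other componentwise. -/
def AutRel (S : Type*) [Semigroup S] {n : ℕ} (a b : Fin n → S) : Prop :=
  ∃ φ : S ≃* S, ∀ k, φ (a k) = b k

/-- A semigroup is ℵ₀-categorical if, for every `n ≥ 1`, the action of its automorphism
group on `n`-tuples has only finitely many orbits. -/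
def Aleph0Categorical (S : Type*) [Semigroup S] : Prop :=
  ∀ n : ℕ, 1 ≤ n → ∃ t : Set (Fin n → S), t.Finite ∧
    ∀ a : Fin n → S, ∃ b ∈ t, AutRel S b a

/-- The relation `#_{S,τ,n}`: two `n`-tuples are related iff some automorphism of `S`
maps the `τ`-class of the `k`-th entry of the first onto the `τ`-class of the `k`-th
entry of the second, for every `k`. -/
def HashRel (S : Type*) [Semigroup S] (τ : Setoid S) {n : ℕ} (a b : Fin n → S) : Prop :=
  ∃ φ : S ≃* S, ∀ k, φ '' {x : S | τ.r (a k) x} = {x : S | τ.r (b k) x}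

/-- A finite nonempty set of cardinality at most `N` is the range of a function
from `Fin N`. -/
lemma exists_range_eq_of_finite {α : Type*} (s : Set α) (hs : s.Finite) (hne : s.Nonempty)
    (N : ℕ) (hN : Nat.card s ≤ N) : ∃ f : Fin N → α, Set.range f = s := by
  haveI : Finite s := hs
  let e : s ≃ Fin (Nat.card s) := Finite.equivFin s
  obtain ⟨x₀, hx₀⟩ := hne
  refine ⟨fun i => if h : (i : ℕ) < Nat.card s then (e.symm ⟨i, h⟩ : α) else x₀, ?_⟩
  ext x
  constructor
  · rintro ⟨i, rfl⟩
    by_cases h : (i : ℕ) < Nat.card s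
    · simp only [dif_pos h]
      exact (e.symm ⟨i, h⟩).2
    · simp only [dif_neg h]
      exact hx₀
  · intro hx
    refine ⟨⟨(e ⟨x, hx⟩ : ℕ), lt_of_lt_of_le (e ⟨x, hx⟩).2 hN⟩, ?_⟩
    have h : ((e ⟨x, hx⟩ : ℕ)) < Nat.card s := (e ⟨x, hx⟩).2
    simp only [dif_pos h]
    have : (⟨(e ⟨x, hx⟩ : ℕ), h⟩ : Fin (Nat.card s)) = e ⟨x, hx⟩ := by
      ext; rfl
    rw [this, Equiv.symm_apply_apply]

/-- Let `S` be a countable semigroup and `τ` an equivalence relation on `S` all of whose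
classes are finite.  Then `#_{S,τ,n}` has finitely many classes on `S^n` for every
`n ≥ 1` iff `S` is ℵ₀-categorical and the set of cardinalities of `τ`-classes is
finite. -/
theorem hashRel_finite_iff (S : Type*) [Semigroup S] [Countable S] (τ : Setoid S)
    (hfin : ∀ m : S, {x : S | τ.r m x}.Finite) :
    (∀ n : ℕ, 1 ≤ n → ∃ t : Set (Fin n → S), t.Finite ∧
        ∀ a : Fin n → S, ∃ b ∈ t, HashRel S τ b a) ↔
      (Aleph0Categorical S ∧ (Set.range fun m : S => Cardinal.mk {x : S | τ.r m x}).Finite) := by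
  constructor
  · intro H
    constructor
    · -- ℵ₀-categoricity
      intro n hn
      obtain ⟨t, ht, hall⟩ := H n hn
      refine ⟨⋃ b ∈ t, {c : Fin n → S | ∀ k, τ.r (b k) (c k)}, ?_, ?_⟩
      · refine ht.biUnion fun b _ => ?_
        have hsub : {c : Fin n → S | ∀ k, τ.r (b k) (c k)} =
            Set.pi Set.univ (fun k => {x : S | τ.r (b k) x}) := by
          ext c; simp [Set.mem_pi]
        rw [hsub]
        exact Set.Finite.pi fun k => hfin (b k)
      · intro a
        obtain ⟨b, hb, φ, hφ⟩ := hall a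
        have hx : ∀ k, ∃ x, τ.r (b k) x ∧ φ x = a k := by
          intro k
          have : a k ∈ φ '' {x | τ.r (b k) x} := by
            rw [hφ k]; exact Setoid.refl _
          obtain ⟨x, hx1, hx2⟩ := this
          exact ⟨x, hx1, hx2⟩
        choose c hc1 hc2 using hx
        exact ⟨c, Set.mem_biUnion hb hc1, φ, hc2⟩
    · -- finiteness of the set of class cardinalities
      obtain ⟨t, ht, hall⟩ := H 1 le_rfl
      have hsub : (Set.range fun m : S => Cardinal.mk {x : S | τ.r m x}) ⊆
          (fun b : Fin 1 → S => Cardinal.mk {x : S | τ.r (b 0) x}) '' t := by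
        rintro _ ⟨m, rfl⟩
        obtain ⟨b, hb, φ, hφ⟩ := hall (fun _ => m)
        refine ⟨b, hb, ?_⟩
        have h0 := hφ 0
        calc Cardinal.mk {x : S | τ.r (b 0) x}
            = Cardinal.mk (φ '' {x : S | τ.r (b 0) x}) :=
              (Cardinal.mk_image_eq φ.injective).symm
          _ = Cardinal.mk {x : S | τ.r m x} := by rw [h0]
      exact (ht.image _).subset hsub
  · rintro ⟨hcat, hcard⟩
    intro n hn
    rcases isEmpty_or_nonempty S with hS | hS
    · exact ⟨∅, Set.finite_empty, fun a => (IsEmpty.false (a ⟨0, hn⟩)).elim⟩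
    · -- a uniform bound on the sizes of τ-classes
      have hNatfin : (Set.range fun m : S => Nat.card {x : S | τ.r m x}).Finite := by
        have hsub : (Set.range fun m : S => Nat.card {x : S | τ.r m x}) ⊆
            Cardinal.toNat '' (Set.range fun m : S => Cardinal.mk {x : S | τ.r m x}) := by
          rintro _ ⟨m, rfl⟩
          exact ⟨_, ⟨m, rfl⟩, rfl⟩
        exact (hcard.image _).subset hsub
      obtain ⟨N, hNub⟩ := hNatfin.bddAbove
      have hNbnd : ∀ m : S, Nat.card {x : S | τ.r m x} ≤ N := fun m =>
        hNub (Set.mem_range_self m)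
      have hNpos : 1 ≤ N := by
        obtain ⟨m₀⟩ := hS
        haveI : Finite {x : S | τ.r m₀ x} := hfin m₀
        haveI : Nonempty {x : S | τ.r m₀ x} := ⟨⟨m₀, Setoid.refl m₀⟩⟩
        exact le_trans Nat.card_pos (hNbnd m₀)
      -- for each `m`, an enumeration of its τ-class
      have henum : ∀ m : S, ∃ f : Fin N → S, Set.range f = {x : S | τ.r m x} := fun m =>
        exists_range_eq_of_finite _ (hfin m) ⟨m, Setoid.refl m⟩ N (hNbnd m)
      choose e he using henum
      -- encode an `n`-tuple by enumerating the classes of its entries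
      let E : (Fin n → S) → (Fin (n * N) → S) := fun a j =>
        e (a (finProdFinEquiv.symm j).1) (finProdFinEquiv.symm j).2
      obtain ⟨t', ht', hall'⟩ := hcat (n * N) (Nat.mul_pos hn hNpos)
      classical
      let g : (Fin (n * N) → S) → (Fin n → S) := fun d =>
        if h : ∃ a : Fin n → S, AutRel S d (E a) then h.choose
        else fun _ => Classical.choice hS
      refine ⟨g '' t', ht'.image g, ?_⟩
      intro a
      obtain ⟨d, hd, hrel⟩ := hall' (E a)
      have h : ∃ a' : Fin n → S, AutRel S d (E a') := ⟨a, hrel⟩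
      have hgd : g d = h.choose := by simp only [g]; exact dif_pos h
      have hEb : AutRel S d (E (g d)) := by rw [hgd]; exact h.choose_spec
      refine ⟨g d, ⟨d, hd, rfl⟩, ?_⟩
      obtain ⟨φa, hφa⟩ := hrel
      obtain ⟨φb, hφb⟩ := hEb
      refine ⟨φb.symm.trans φa, ?_⟩
      intro k
      have hcomp : ∀ i : Fin N, (φb.symm.trans φa) (e (g d k) i) = e (a k) i := by
        intro i
        have hidx : (finProdFinEquiv.symm (finProdFinEquiv (k, i))).1 = k ∧
            (finProdFinEquiv.symm (finProdFinEquiv (k, i))).2 = i := by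
          rw [Equiv.symm_apply_apply]
          exact ⟨rfl, rfl⟩
        have hEb' : e (g d k) i = E (g d) (finProdFinEquiv (k, i)) := by
          simp only [E, hidx.1, hidx.2]
        have hEa' : e (a k) i = E a (finProdFinEquiv (k, i)) := by
          simp only [E, hidx.1, hidx.2]
        have h1 : φb.symm (E (g d) (finProdFinEquiv (k, i))) = d (finProdFinEquiv (k, i)) := by
          rw [← hφb (finProdFinEquiv (k, i)), MulEquiv.symm_apply_apply]
        calc (φb.symm.trans φa) (e (g d k) i)
            = φa (φb.symm (E (g d) (finProdFinEquiv (k, i)))) := by rw [hEb']; rfl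
          _ = φa (d (finProdFinEquiv (k, i))) := by rw [h1]
          _ = E a (finProdFinEquiv (k, i)) := hφa _
          _ = e (a k) i := hEa'.symm
      have hrangeb : {x : S | τ.r (g d k) x} = Set.range (e (g d k)) := (he (g d k)).symm
      have hrangea : {x : S | τ.r (a k) x} = Set.range (e (a k)) := (he (a k)).symm
      rw [hrangeb, hrangea, ← Set.range_comp]
      have hfun : ((φb.symm.trans φa) ∘ e (g d k)) = e (a k) := funext hcomp
      rw [hfun]
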